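/- Let G act 2-transitively on a finite set X with |X| = n ≥ 2, and let H be a regular normal subgroup of G. Then all non-identity elements of H are conjugate in G. -/
import Mathlib

theorem regular_normal_subgroup_nonid_conjugate
    {G : Type*} [Group G] [Finite G] {X : Type*} [Finite X]
    [MulAction G X] {n : ℕ} (hn : 2 ≤ n) (hcard : Nat.card X = n)
    (h2t : ∀ a b c d : X, a ≠ b → c ≠ d → ∃ g : G, g • a = c ∧ g • b = d)
    (H : Subgroup G) (hnorm : H.Normal)
    (hreg : ∀ x y : X, ∃! h : H, (h : G) • x = y) :
    ∀ h₁ h₂ : G, h₁ ∈ H → h₂ ∈ H → h₁ ≠ 1 → h₂ ≠ 1 →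
      ∃ g : G, g * h₁ * g⁻¹ = h₂ := by
  intro h₁ h₂ hm₁ hm₂ hne₁ hne₂
  have hX : Nonempty X := (Nat.card_ne_zero.mp (by omega)).1
  obtain ⟨x⟩ := hX
  have key : ∀ h : G, h ∈ H → h ≠ 1 → h • x ≠ x := by
    intro h hm hne hx
    obtain ⟨u, hu, huniq⟩ := hreg x x
    have e1 := huniq ⟨h, hm⟩ hx
    have e2 := huniq 1 (by simp)
    apply hne
    have : (⟨h, hm⟩ : H) = 1 := e1.trans e2.symm
    exact congrArg Subtype.val this
  obtain ⟨g, hg1, hg2⟩ := h2t x (h₁ • x) x (h₂ • x)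
    (Ne.symm (key h₁ hm₁ hne₁)) (Ne.symm (key h₂ hm₂ hne₂))
  have hginv : g⁻¹ • x = x := by nth_rewrite 1 [← hg1]; exact inv_smul_smul g x
  have hconj : g * h₁ * g⁻¹ ∈ H := hnorm.conj_mem h₁ hm₁ g
  have hact : (g * h₁ * g⁻¹) • x = h₂ • x := by
    rw [mul_smul, mul_smul, hginv, hg2]
  obtain ⟨u, hu, huniq⟩ := hreg x (h₂ • x)
  have e1 := huniq ⟨g * h₁ * g⁻¹, hconj⟩ hact
  have e2 := huniq ⟨h₂, hm₂⟩ rfl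
  exact ⟨g, congrArg Subtype.val (e1.trans e2.symm)⟩
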